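/- Let A be an m×n real matrix with restricted isometry constants δ_q, and let k be an odd positive integer. Then for every 2k-sparse vector z ∈ ℝⁿ one has ‖Az‖₂² ≥ (1 − δ_{k+1} − 2δ_k)‖z‖₂². -/

import Mathlib

open Finset

noncomputable def nsq {ι : Type*} [Fintype ι] (x : ι → ℝ) : ℝ := ∑ i, (x i) ^ 2

noncomputable def n2 {ι : Type*} [Fintype ι] (x : ι → ℝ) : ℝ := Real.sqrt (nsq x)

noncomputable def supp {n : ℕ} (x : Fin n → ℝ) : Finset (Fin n) :=
  Finset.univ.filter (fun i => x i ≠ 0)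

def Sparse {n : ℕ} (k : ℕ) (x : Fin n → ℝ) : Prop := (supp x).card ≤ k

def restr {n : ℕ} (x : Fin n → ℝ) (T : Finset (Fin n)) : Fin n → ℝ :=
  fun i => if i ∈ T then x i else 0

def SatRIP {m n : ℕ} (A : Matrix (Fin m) (Fin n) ℝ) (q : ℕ) (δ : ℝ) : Prop :=
  ∀ z : Fin n → ℝ, Sparse q z →
    (1 - δ) * nsq z ≤ nsq (A.mulVec z) ∧ nsq (A.mulVec z) ≤ (1 + δ) * nsq z

/-- `δ` is the `q`-th order restricted isometry constant of `A`:
the smallest `δ' ≥ 0` such that `(1-δ')‖z‖² ≤ ‖Az‖² ≤ (1+δ')‖z‖²` for all `q`-sparse `z`. -/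
def IsRIC {m n : ℕ} (A : Matrix (Fin m) (Fin n) ℝ) (q : ℕ) (δ : ℝ) : Prop :=
  IsLeast {δ' : ℝ | 0 ≤ δ' ∧ SatRIP A q δ'} δ

/-- membership in `W^k`: binary vectors with exactly `k` entries equal to 1. -/
def InW {n : ℕ} (k : ℕ) (w : Fin n → ℝ) : Prop :=
  (∀ i, w i = 0 ∨ w i = 1) ∧ (Finset.univ.filter (fun i => w i = 1)).card = k

/-- membership in the polytope `P^k`. -/
def InP {n : ℕ} (k : ℕ) (w : Fin n → ℝ) : Prop :=
  (∑ i, w i) = (k : ℝ) ∧ ∀ i, 0 ≤ w i ∧ w i ≤ 1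

/-- `S` is an index set of the `k` largest absolute entries of `x`. -/
def IsTopK {n : ℕ} (x : Fin n → ℝ) (k : ℕ) (S : Finset (Fin n)) : Prop :=
  S.card = k ∧ ∀ i ∈ S, ∀ j ∉ S, |x j| ≤ |x i|

/-- `d` is a hard thresholding `H_k(z)` of `z`. -/
def IsHT {n : ℕ} (k : ℕ) (z d : Fin n → ℝ) : Prop :=
  Sparse k d ∧ ∀ d' : Fin n → ℝ, Sparse k d' → n2 (z - d) ≤ n2 (z - d')

/-- `w 0, …, w (ω-1)` are successive compression minimizers at `x^p` (with `u^p = up`). -/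
def SCM {m n : ℕ} (A : Matrix (Fin m) (Fin n) ℝ) (y : Fin m → ℝ) (k ω : ℕ)
    (up : Fin n → ℝ) (w : ℕ → Fin n → ℝ) : Prop :=
  ∀ j < ω, InP k (w j) ∧ ∀ v : Fin n → ℝ, InP k v →
    n2 (y - A.mulVec (up * (∏ l ∈ Finset.range j, w l) * w j)) ≤
    n2 (y - A.mulVec (up * (∏ l ∈ Finset.range j, w l) * v))

/-- the `ℓ∞` norm of `x` restricted to `T` (zero if `T` is empty). -/
noncomputable def linfT {n : ℕ} (x : Fin n → ℝ) (T : Finset (Fin n)) : ℝ :=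
  if h : T.Nonempty then T.sup' h (fun j => |x j|) else 0

lemma nsq_nonneg' {ι : Type*} [Fintype ι] (x : ι → ℝ) : 0 ≤ nsq x :=
  Finset.sum_nonneg fun _ _ => sq_nonneg _

lemma nsq_add' {ι : Type*} [Fintype ι] (u v : ι → ℝ) :
    nsq (u + v) = nsq u + 2 * (∑ i, u i * v i) + nsq v := by
  simp only [nsq, Pi.add_apply, Finset.mul_sum, ← Finset.sum_add_distrib]
  exact Finset.sum_congr rfl fun i _ => by ring

lemma nsq_sub' {ι : Type*} [Fintype ι] (u v : ι → ℝ) :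
    nsq (u - v) = nsq u - 2 * (∑ i, u i * v i) + nsq v := by
  simp only [nsq, Pi.sub_apply, Finset.mul_sum, ← Finset.sum_add_distrib,
    ← Finset.sum_sub_distrib]
  exact Finset.sum_congr rfl fun i _ => by ring

lemma ip_zero_of_disj {ι : Type*} [Fintype ι] (u v : ι → ℝ)
    (h : ∀ i, u i = 0 ∨ v i = 0) : (∑ i, u i * v i) = 0 :=
  Finset.sum_eq_zero fun i _ => by rcases h i with h' | h' <;> simp [h']

lemma supp_restr_subset {n : ℕ} (z : Fin n → ℝ) (T : Finset (Fin n)) :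
    supp (restr z T) ⊆ T := by
  intro i hi
  simp only [supp, restr, Finset.mem_filter] at hi
  by_contra h
  simp [h] at hi

lemma supp_add_subset' {n : ℕ} (u v : Fin n → ℝ) :
    supp (u + v) ⊆ supp u ∪ supp v := by
  intro i hi
  simp only [supp, Finset.mem_filter, Finset.mem_union, Pi.add_apply,
    Finset.mem_univ, true_and] at *
  by_contra h
  push_neg at h
  simp [h.1, h.2] at hi

lemma supp_sub_subset' {n : ℕ} (u v : Fin n → ℝ) :
    supp (u - v) ⊆ supp u ∪ supp v := by
  intro i hi
  simp only [supp, Finset.mem_filter, Finset.mem_union, Pi.sub_apply,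
    Finset.mem_univ, true_and] at *
  by_contra h
  push_neg at h
  simp [h.1, h.2] at hi

lemma restr_disj' {n : ℕ} (z : Fin n → ℝ) {S T : Finset (Fin n)} (h : Disjoint S T) :
    ∀ i, restr z S i = 0 ∨ restr z T i = 0 := by
  intro i
  by_cases hs : i ∈ S
  · right; simp [restr, Finset.disjoint_left.mp h hs]
  · left; simp [restr, hs]

lemma restr_split' {n : ℕ} (z : Fin n → ℝ) {S T : Finset (Fin n)} (h : T ⊆ S) :
    restr z S = restr z T + restr z (S \ T) := by
  funext i
  simp only [restr, Pi.add_apply, Finset.mem_sdiff]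
  by_cases hT : i ∈ T
  · simp [hT, h hT]
  · by_cases hS : i ∈ S <;> simp [hT, hS]

lemma split_finset' {α : Type*} [DecidableEq α] (s : Finset α) (a b : ℕ)
    (h : s.card ≤ a + b) : ∃ t ⊆ s, t.card ≤ a ∧ (s \ t).card ≤ b := by
  obtain ⟨t, hts, htc⟩ := Finset.exists_subset_card_eq (s := s) (n := min a s.card) (min_le_right _ _)
  refine ⟨t, hts, htc ▸ min_le_left _ _, ?_⟩
  rw [Finset.card_sdiff_of_subset hts, htc]
  omega

lemma cross_bound' {m n : ℕ} (A : Matrix (Fin m) (Fin n) ℝ) {q : ℕ} {δ : ℝ}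
    (hA : SatRIP A q δ) (u v : Fin n → ℝ)
    (h1 : Sparse q (u + v)) (h2 : Sparse q (u - v))
    (hd : ∀ i, u i = 0 ∨ v i = 0) :
    -(δ / 2) * (nsq u + nsq v) ≤ ∑ i, A.mulVec u i * A.mulVec v i := by
  have hp := (hA (u + v) h1).1
  have hm := (hA (u - v) h2).2
  have hz := ip_zero_of_disj u v hd
  have huv : nsq (u + v) = nsq u + nsq v := by rw [nsq_add', hz]; ring
  have huv' : nsq (u - v) = nsq u + nsq v := by rw [nsq_sub', hz]; ring
  rw [huv, Matrix.mulVec_add, nsq_add'] at hp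
  rw [huv', Matrix.mulVec_sub, nsq_sub'] at hm
  linarith

theorem stmt3 {m n : ℕ} (A : Matrix (Fin m) (Fin n) ℝ)
    (k : ℕ) (hk : 0 < k) (hko : Odd k)
    (δk δk1 : ℝ) (hδk : IsRIC A k δk) (hδk1 : IsRIC A (k + 1) δk1) :
    ∀ z : Fin n → ℝ, Sparse (2 * k) z →
      (1 - δk1 - 2 * δk) * nsq z ≤ nsq (A.mulVec z) := by
  obtain ⟨⟨hk0, hksat⟩, hkleast⟩ := hδk
  obtain ⟨⟨hk10, hk1sat⟩, _⟩ := hδk1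
  have hmono : δk ≤ δk1 :=
    hkleast ⟨hk10, fun z hz => hk1sat z (hz.trans (Nat.le_succ k))⟩
  intro z hz
  obtain ⟨r, hr⟩ := hko
  -- split supp z into S (≤ k+1) and T (≤ k-1)
  obtain ⟨S, hSsub, hScard, hTcard⟩ := split_finset' (supp z) (k + 1) (k - 1)
    (by unfold Sparse at hz; omega)
  set T : Finset (Fin n) := supp z \ S with hT
  obtain ⟨S1, hS1sub, hS1card, hS2card⟩ := split_finset' S (r + 1) (r + 1) (by omega)
  obtain ⟨T1, hT1sub, hT1card, hT2card⟩ := split_finset' T r r (by omega)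
  set x := restr z S with hx
  set y := restr z T with hy
  set x1 := restr z S1 with hx1
  set x2 := restr z (S \ S1) with hx2
  set y1 := restr z T1 with hy1
  set y2 := restr z (T \ T1) with hy2
  -- z = x + y
  have hzxy : z = x + y := by
    funext i
    simp only [hx, hy, restr, Pi.add_apply, hT, Finset.mem_sdiff]
    by_cases hiS : i ∈ S
    · simp [hiS]
    · by_cases hiZ : i ∈ supp z
      · simp [hiS, hiZ]
      · have : z i = 0 := by
          by_contra h
          exact hiZ (by simp [supp, h])
        simp [hiS, hiZ, this]
  have hxsplit : x = x1 + x2 := restr_split' z hS1sub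
  have hysplit : y = y1 + y2 := restr_split' z hT1sub
  -- disjointness facts
  have dST : Disjoint S T := Finset.disjoint_sdiff
  have dx : ∀ i, x1 i = 0 ∨ x2 i = 0 := restr_disj' z Finset.disjoint_sdiff
  have dy : ∀ i, y1 i = 0 ∨ y2 i = 0 := restr_disj' z Finset.disjoint_sdiff
  have dxy : ∀ i, x i = 0 ∨ y i = 0 := restr_disj' z dST
  have dS1T : Disjoint S1 T := Finset.disjoint_of_subset_left hS1sub dST
  have dS2T : Disjoint (S \ S1) T := Finset.disjoint_of_subset_left (Finset.sdiff_subset) dST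
  have d11 : ∀ i, x1 i = 0 ∨ y1 i = 0 :=
    restr_disj' z (Finset.disjoint_of_subset_right hT1sub dS1T)
  have d12 : ∀ i, x1 i = 0 ∨ y2 i = 0 :=
    restr_disj' z (Finset.disjoint_of_subset_right Finset.sdiff_subset dS1T)
  have d21 : ∀ i, x2 i = 0 ∨ y1 i = 0 :=
    restr_disj' z (Finset.disjoint_of_subset_right hT1sub dS2T)
  have d22 : ∀ i, x2 i = 0 ∨ y2 i = 0 :=
    restr_disj' z (Finset.disjoint_of_subset_right Finset.sdiff_subset dS2T)
  -- sparsity facts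
  have sparse_pm : ∀ (u v : Fin n → ℝ) (U V : Finset (Fin n)) (a b : ℕ),
      u = restr z U → v = restr z V → U.card ≤ a → V.card ≤ b →
      Sparse (a + b) (u + v) ∧ Sparse (a + b) (u - v) := by
    intro u v U V a b hu hv hU hV
    subst hu hv
    have hUV : #(U ∪ V) ≤ a + b := le_trans (Finset.card_union_le U V) (by omega)
    have hsub := Finset.union_subset_union (supp_restr_subset z U) (supp_restr_subset z V)
    constructor
    · exact le_trans (Finset.card_le_card ((supp_add_subset' _ _).trans hsub)) hUV
    · exact le_trans (Finset.card_le_card ((supp_sub_subset' _ _).trans hsub)) hUV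
  have hk' : r + 1 + r = k := by omega
  have sp11 := sparse_pm x1 y1 S1 T1 (r + 1) r hx1 hy1 hS1card hT1card
  have sp12 := sparse_pm x1 y2 S1 (T \ T1) (r + 1) r hx1 hy2 hS1card hT2card
  have sp21 := sparse_pm x2 y1 (S \ S1) T1 (r + 1) r hx2 hy1 hS2card hT1card
  have sp22 := sparse_pm x2 y2 (S \ S1) (T \ T1) (r + 1) r hx2 hy2 hS2card hT2card
  rw [hk'] at sp11 sp12 sp21 sp22
  -- cross bounds
  have c11 := cross_bound' A hksat x1 y1 sp11.1 sp11.2 d11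
  have c12 := cross_bound' A hksat x1 y2 sp12.1 sp12.2 d12
  have c21 := cross_bound' A hksat x2 y1 sp21.1 sp21.2 d21
  have c22 := cross_bound' A hksat x2 y2 sp22.1 sp22.2 d22
  -- diagonal bounds
  have hxs : Sparse (k + 1) x :=
    le_trans (Finset.card_le_card (supp_restr_subset z S)) hScard
  have hys : Sparse k y :=
    le_trans (Finset.card_le_card (supp_restr_subset z T)) (by omega)
  have bx := (hk1sat x hxs).1
  have by' := (hksat y hys).1
  -- decompose nsq (A z)
  have key : nsq (A.mulVec z) = nsq (A.mulVec x) +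
      2 * (∑ i, A.mulVec x i * A.mulVec y i) + nsq (A.mulVec y) := by
    rw [hzxy, Matrix.mulVec_add, nsq_add']
  -- bilinear expansion of the inner product
  have Iexp : (∑ i, A.mulVec x i * A.mulVec y i) =
      (∑ i, A.mulVec x1 i * A.mulVec y1 i) + (∑ i, A.mulVec x1 i * A.mulVec y2 i) +
      (∑ i, A.mulVec x2 i * A.mulVec y1 i) + (∑ i, A.mulVec x2 i * A.mulVec y2 i) := by
    rw [hxsplit, hysplit, Matrix.mulVec_add, Matrix.mulVec_add]
    simp only [Pi.add_apply, ← Finset.sum_add_distrib]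
    exact Finset.sum_congr rfl fun i _ => by ring
  -- nsq splittings
  have nzxy : nsq z = nsq x + nsq y := by
    rw [hzxy, nsq_add', ip_zero_of_disj x y dxy]; ring
  have nx : nsq x = nsq x1 + nsq x2 := by
    rw [hxsplit, nsq_add', ip_zero_of_disj x1 x2 dx]; ring
  have ny : nsq y = nsq y1 + nsq y2 := by
    rw [hysplit, nsq_add', ip_zero_of_disj y1 y2 dy]; ring
  have hyn := nsq_nonneg' y
  nlinarith [mul_nonneg (sub_nonneg.mpr hmono) hyn]
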